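/- arXiv:2206.02676 — 2 statements merged into one kernel-verified Lean document; each statement's English description precedes it below -/
import Mathlib

section
/- Let h ∈ {1,…,n} be such that |λ_h|/κ(h) < |λ_k|/κ(k) for all k ≠ h. Then the matrix S*^𝒯 = (n; δ*, σ*), with c = cos(hπ/(n+1)), δ* = 2(n c² δ − (n−1) c σ)/(n−1+2n c²), σ* = ((n−1)σ − n c δ)/(n−1+2n c²), is the UNIQUE closest matrix in 𝒮 ∩ 𝒯 to T in the Frobenius norm: every S ∈ 𝒮 ∩ 𝒯 with ‖T − S‖_F = |λ_h|/κ(h) equals S*^𝒯, and ‖T − S‖_F > |λ_h|/κ(h) for all other S ∈ 𝒮 ∩ 𝒯. -/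
open Real Filter Matrix

noncomputable def tridiag (n : ℕ) (d s : ℝ) : Matrix (Fin n) (Fin n) ℝ :=
  Matrix.of fun i j =>
    if (i : ℕ) = (j : ℕ) then d
    else if (i : ℕ) + 1 = (j : ℕ) ∨ (j : ℕ) + 1 = (i : ℕ) then s else 0

noncomputable def lam (n : ℕ) (δ σ : ℝ) (h : ℕ) : ℝ :=
  δ + 2 * σ * Real.cos (h * Real.pi / (n + 1))

noncomputable def kap (n h : ℕ) : ℝ :=
  Real.sqrt (1 / (n : ℝ) + 2 / ((n : ℝ) - 1) * Real.cos (h * Real.pi / (n + 1)) ^ 2)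

noncomputable def evec (n h : ℕ) : Fin n → ℝ :=
  fun k => Real.sqrt (2 / (n + 1)) * Real.sin (h * (k.1 + 1) * Real.pi / (n + 1))

noncomputable def frobNorm {n : ℕ} (A : Matrix (Fin n) (Fin n) ℝ) : ℝ :=
  Real.sqrt (∑ i, ∑ j, A i j ^ 2)

noncomputable def sinv (n k m : ℕ) : ℝ := Real.sin (k * m * Real.pi / (n + 1))

lemma sinv_zero (n k : ℕ) : sinv n k 0 = 0 := by simp [sinv]

lemma sinv_top (n k : ℕ) : sinv n k (n + 1) = 0 := by
  have hne : (n : ℝ) + 1 ≠ 0 := by positivity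
  have : (k : ℝ) * (↑(n + 1)) * π / (↑n + 1) = k * π := by
    push_cast; field_simp
  rw [sinv, this, Real.sin_nat_mul_pi]

lemma sinv_rec (n k m : ℕ) :
    sinv n k m + sinv n k (m + 2) =
      2 * Real.cos (k * π / (n + 1)) * sinv n k (m + 1) := by
  unfold sinv
  push_cast
  have h1 : (k : ℝ) * m * π / (↑n + 1) =
      (k * (m + 1) * π / (↑n + 1)) - (k * π / (↑n + 1)) := by ring
  have h2 : (k : ℝ) * (m + 2) * π / (↑n + 1) =
      (k * (m + 1) * π / (↑n + 1)) + (k * π / (↑n + 1)) := by ring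
  rw [h1, h2, Real.sin_sub, Real.sin_add]
  ring

lemma evec_eq_sinv (n k : ℕ) (j : Fin n) :
    evec n k j = Real.sqrt (2 / (n + 1)) * sinv n k (j.1 + 1) := by
  simp [evec, sinv]

lemma tridiag_mulVec (n k : ℕ) (d s : ℝ) :
    tridiag n d s *ᵥ evec n k
      = (d + 2 * s * Real.cos (k * π / (n + 1))) • evec n k := by
  funext i
  set C := Real.sqrt (2 / (n + 1)) with hC
  have hg : ∀ j : Fin n, evec n k j = C * sinv n k (j.1 + 1) := evec_eq_sinv n k
  have key : ∀ i' j : Fin n, tridiag n d s i' j * evec n k j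
      = (if (i' : ℕ) = (j : ℕ) then d * (C * sinv n k (j.1 + 1)) else 0)
      + (if (i' : ℕ) + 1 = (j : ℕ) then s * (C * sinv n k (j.1 + 1)) else 0)
      + (if (j : ℕ) + 1 = (i' : ℕ) then s * (C * sinv n k (j.1 + 1)) else 0) := by
    intro i' j
    rw [hg j]
    simp only [tridiag, Matrix.of_apply]
    split_ifs <;> first | ring1 | (exfalso; omega)
  rw [Matrix.mulVec, dotProduct]
  simp only [key]
  rw [Finset.sum_add_distrib, Finset.sum_add_distrib]
  have S1 : ∑ j : Fin n, (if (i : ℕ) = (j : ℕ) then d * (C * sinv n k (j.1 + 1)) else 0)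
      = d * (C * sinv n k (i.1 + 1)) := by
    rw [Fin.sum_univ_eq_sum_range (fun j => if (i : ℕ) = j then d * (C * sinv n k (j + 1)) else 0) n,
      Finset.sum_ite_eq]
    simp [i.isLt]
  have S2 : ∑ j : Fin n, (if (i : ℕ) + 1 = (j : ℕ) then s * (C * sinv n k (j.1 + 1)) else 0)
      = s * (C * sinv n k (i.1 + 2)) := by
    rw [Fin.sum_univ_eq_sum_range (fun j => if (i : ℕ) + 1 = j then s * (C * sinv n k (j + 1)) else 0) n,
      Finset.sum_ite_eq]
    by_cases hlt : (i : ℕ) + 1 ∈ Finset.range n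
    · rw [if_pos hlt]
    · rw [if_neg hlt]
      have hin : (i : ℕ) + 1 = n := by
        have := i.isLt; simp [Finset.mem_range] at hlt; omega
      have : (i : ℕ) + 2 = n + 1 := by omega
      rw [this, sinv_top]; ring
  have S3 : ∑ j : Fin n, (if (j : ℕ) + 1 = (i : ℕ) then s * (C * sinv n k (j.1 + 1)) else 0)
      = s * (C * sinv n k i.1) := by
    rw [Fin.sum_univ_eq_sum_range (fun j => if j + 1 = (i : ℕ) then s * (C * sinv n k (j + 1)) else 0) n]
    rcases Nat.eq_zero_or_pos (i : ℕ) with h0 | hpos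
    · rw [h0, sinv_zero]
      rw [Finset.sum_eq_zero]
      · ring
      · intro x _; simp [h0]
    · obtain ⟨m, hm⟩ : ∃ m, (i : ℕ) = m + 1 := ⟨(i : ℕ) - 1, by omega⟩
      have hmem : m ∈ Finset.range n := by
        rw [Finset.mem_range]; have := i.isLt; omega
      rw [Finset.sum_eq_single_of_mem m hmem]
      · rw [hm]; simp
      · intro x _ hx
        rw [if_neg (by omega)]
  rw [S1, S2, S3, Pi.smul_apply, hg i, smul_eq_mul]
  have := sinv_rec n k i.1
  linear_combination s * C * this

lemma tridiag_sub (n : ℕ) (d s d' s' : ℝ) :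
    tridiag n d s - tridiag n d' s' = tridiag n (d - d') (s - s') := by
  ext i j
  simp only [Matrix.sub_apply, tridiag, Matrix.of_apply]
  split_ifs <;> ring

lemma sum_sq_tridiag (n : ℕ) (hn : 1 ≤ n) (a b : ℝ) :
    ∑ i, ∑ j, (tridiag n a b i j) ^ 2 = n * a ^ 2 + 2 * ((n : ℝ) - 1) * b ^ 2 := by
  have key : ∀ i j : Fin n, (tridiag n a b i j) ^ 2
      = (if (i : ℕ) = (j : ℕ) then a ^ 2 else 0)
      + (if (i : ℕ) + 1 = (j : ℕ) then b ^ 2 else 0)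
      + (if (j : ℕ) + 1 = (i : ℕ) then b ^ 2 else 0) := by
    intro i j
    simp only [tridiag, Matrix.of_apply]
    split_ifs <;> first | ring1 | (exfalso; omega)
  simp only [key]
  simp only [Finset.sum_add_distrib]
  have outer : ∀ f : ℕ → ℕ → ℝ, ∑ i : Fin n, ∑ j : Fin n, f i.1 j.1
      = ∑ i ∈ Finset.range n, ∑ j ∈ Finset.range n, f i j := by
    intro f
    rw [Fin.sum_univ_eq_sum_range (fun i => ∑ j : Fin n, f i j.1) n]
    exact Finset.sum_congr rfl fun i _ => Fin.sum_univ_eq_sum_range (fun j => f i j) n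
  have count2 : ∀ bb : ℝ, ∑ i ∈ Finset.range n,
      (if i + 1 ∈ Finset.range n then bb else 0) = ((n : ℝ) - 1) * bb := by
    intro bb
    rw [← Finset.sum_subset (Finset.range_subset_range.2 (Nat.sub_le n 1))
      (fun x hx hnx => by
        rw [if_neg]
        simp only [Finset.mem_range] at hx hnx ⊢
        omega)]
    rw [Finset.sum_congr rfl (fun x hx => by
      rw [if_pos]
      simp only [Finset.mem_range] at hx ⊢
      omega)]
    rw [Finset.sum_const, Finset.card_range, nsmul_eq_mul]
    congr 1
    push_cast [Nat.cast_sub hn]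
    ring
  have D1 : ∑ i : Fin n, ∑ j : Fin n,
      (if (i : ℕ) = (j : ℕ) then a ^ 2 else 0) = (n : ℝ) * a ^ 2 := by
    rw [outer (fun i j => if i = j then a ^ 2 else 0)]
    rw [Finset.sum_congr rfl (fun i hi => by
      rw [Finset.sum_ite_eq (Finset.range n) i (fun _ => a ^ 2), if_pos hi])]
    rw [Finset.sum_const, Finset.card_range, nsmul_eq_mul]
  have D2 : ∑ i : Fin n, ∑ j : Fin n,
      (if (i : ℕ) + 1 = (j : ℕ) then b ^ 2 else 0) = ((n : ℝ) - 1) * b ^ 2 := by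
    rw [outer (fun i j => if i + 1 = j then b ^ 2 else 0)]
    rw [Finset.sum_congr rfl (fun i _ =>
      Finset.sum_ite_eq (Finset.range n) (i + 1) (fun _ => b ^ 2))]
    exact count2 (b ^ 2)
  have D3 : ∑ i : Fin n, ∑ j : Fin n,
      (if (j : ℕ) + 1 = (i : ℕ) then b ^ 2 else 0) = ((n : ℝ) - 1) * b ^ 2 := by
    rw [outer (fun i j => if j + 1 = i then b ^ 2 else 0), Finset.sum_comm]
    rw [Finset.sum_congr rfl (fun j _ =>
      Finset.sum_ite_eq (Finset.range n) (j + 1) (fun _ => b ^ 2))]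
    exact count2 (b ^ 2)
  rw [D1, D2, D3]
  ring

lemma evec_ne_zero (n k : ℕ) (hn : 1 ≤ n) (h1 : 1 ≤ k) (hk : k ≤ n) : evec n k ≠ 0 := by
  intro h0
  have hi : (0 : ℕ) < n := hn
  have := congrFun h0 ⟨0, hi⟩
  simp only [evec, Pi.zero_apply] at this
  have hC : 0 < Real.sqrt (2 / (n + 1)) := Real.sqrt_pos.2 (by positivity)
  have hsin : 0 < Real.sin ((k : ℝ) * (0 + 1) * π / (n + 1)) := by
    apply Real.sin_pos_of_pos_of_lt_pi
    · have : (0:ℝ) < (k:ℝ) := by exact_mod_cast h1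
      positivity
    · rw [div_lt_iff₀ (by positivity)]
      have hk' : (k : ℝ) ≤ n := by exact_mod_cast hk
      nlinarith [Real.pi_pos]
  nlinarith

lemma singular_line (n : ℕ) (hn : 2 ≤ n) (d s : ℝ)
    (hdet : (tridiag n d s).det = 0) :
    ∃ k : ℕ, 1 ≤ k ∧ k ≤ n ∧ d + 2 * s * Real.cos (k * π / (n + 1)) = 0 := by
  obtain ⟨v, hv0, hv⟩ := (Matrix.exists_mulVec_eq_zero_iff).2 hdet
  set E : Fin n → (Fin n → ℝ) := fun j => evec n (j.1 + 1) with hE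
  set μ : Fin n → ℝ := fun j => 2 * Real.cos ((↑(j.1 + 1) : ℝ) * π / (n + 1)) with hμ
  have hcancel : ∀ x y : ℝ, x * π / (n + 1) = y * π / (n + 1) → x = y := by
    intro x y hxy
    have hne : (n : ℝ) + 1 ≠ 0 := by positivity
    field_simp at hxy
    exact hxy
  have hmem : ∀ j : Fin n, (↑(j.1 + 1) : ℝ) * π / (n + 1) ∈ Set.Icc 0 π := by
    intro j
    constructor
    · positivity
    · rw [div_le_iff₀ (by positivity)]
      have : ((j.1 + 1 : ℕ) : ℝ) ≤ (n : ℝ) + 1 := by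
        have := j.isLt; exact_mod_cast by omega
      nlinarith [Real.pi_pos]
  have hμinj : Function.Injective μ := by
    intro j j' hjj'
    simp only [hμ] at hjj'
    have hcos : Real.cos ((↑(j.1 + 1) : ℝ) * π / (n + 1))
        = Real.cos ((↑(j'.1 + 1) : ℝ) * π / (n + 1)) := by linarith
    have := Real.injOn_cos (hmem j) (hmem j') hcos
    have := hcancel _ _ this
    have : j.1 + 1 = j'.1 + 1 := by exact_mod_cast this
    exact Fin.ext (by omega)
  have heig : ∀ j : Fin n,
      Module.End.HasEigenvector (Matrix.mulVecLin (tridiag n 0 1)) (μ j) (E j) := by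
    intro j
    refine ⟨Module.End.mem_eigenspace_iff.2 ?_, ?_⟩
    · rw [Matrix.mulVecLin_apply, hE, tridiag_mulVec]
      simp only [hμ]
      norm_num
    · exact evec_ne_zero n (j.1 + 1) (by omega) (by omega) (by have := j.isLt; omega)
  have hLI : LinearIndependent ℝ E :=
    Module.End.eigenvectors_linearIndependent' (Matrix.mulVecLin (tridiag n 0 1)) μ hμinj E heig
  have hcard : Fintype.card (Fin n) = Module.finrank ℝ (Fin n → ℝ) := by
    simp [Module.finrank_fin_fun]
  have : Nonempty (Fin n) := ⟨⟨0, by omega⟩⟩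
  set b := basisOfLinearIndependentOfCardEqFinrank hLI hcard with hb
  have hbcoe : ⇑b = E := coe_basisOfLinearIndependentOfCardEqFinrank hLI hcard
  set a : Fin n → ℝ := fun j => b.repr v j with ha
  have hrep : ∑ j, a j • E j = v := by
    rw [← hbcoe]; exact b.sum_repr v
  set ν : Fin n → ℝ := fun j => d + 2 * s * Real.cos ((↑(j.1 + 1) : ℝ) * π / (n + 1)) with hν
  have happ : ∑ j, (a j * ν j) • E j = 0 := by
    have h1 : tridiag n d s *ᵥ v = ∑ j, a j • (tridiag n d s *ᵥ E j) := by
      rw [← hrep, ← Matrix.mulVecLin_apply, map_sum]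
      simp [Matrix.mulVecLin_apply, Matrix.mulVec_smul]
    have h2 : ∀ j : Fin n, tridiag n d s *ᵥ E j = ν j • E j := fun j =>
      tridiag_mulVec n (j.1 + 1) d s
    rw [← hv] at *
    rw [h1]
    refine Finset.sum_congr rfl fun j _ => ?_
    rw [h2 j, smul_smul]
  have hall := Fintype.linearIndependent_iff.mp hLI (fun j => a j * ν j) happ
  have hex : ∃ j, a j ≠ 0 := by
    by_contra hc
    push_neg at hc
    apply hv0
    rw [← hrep]
    simp [hc]
  obtain ⟨j, hj⟩ := hex
  have hνj : ν j = 0 := by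
    rcases mul_eq_zero.mp (hall j) with h | h
    · exact absurd h hj
    · exact h
  refine ⟨j.1 + 1, by omega, by have := j.isLt; omega, ?_⟩
  have h' := hνj
  simp only [hν] at h'
  push_cast at h' ⊢
  exact h'

lemma quad_decomp (N c δ σ d s δs σs : ℝ) (hD : N - 1 + 2 * N * c ^ 2 ≠ 0)
    (hδs : δs = 2 * (N * c ^ 2 * δ - (N - 1) * c * σ) / (N - 1 + 2 * N * c ^ 2))
    (hσs : σs = ((N - 1) * σ - N * c * δ) / (N - 1 + 2 * N * c ^ 2))
    (hline : d + 2 * c * s = 0) :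
    N * (δ - d) ^ 2 + 2 * (N - 1) * (σ - s) ^ 2
      = (δ + 2 * σ * c) ^ 2 * N * (N - 1) / (N - 1 + 2 * N * c ^ 2)
        + N * (δs - d) ^ 2 + 2 * (N - 1) * (σs - s) ^ 2 := by
  subst hδs hσs
  have hd : d = -(2 * c * s) := by linarith
  subst hd
  generalize hDd : N - 1 + 2 * N * c ^ 2 = D at *
  field_simp
  rw [← hDd]
  ring

lemma target_eq (n k : ℕ) (hn : 2 ≤ n) (δ σ : ℝ) :
    |lam n δ σ k| / kap n k
      = Real.sqrt ((lam n δ σ k) ^ 2 * n * ((n : ℝ) - 1)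
          / ((n : ℝ) - 1 + 2 * n * (Real.cos (k * π / (n + 1))) ^ 2)) := by
  have hnR : (2 : ℝ) ≤ (n : ℝ) := by exact_mod_cast hn
  have hn0 : (0 : ℝ) < (n : ℝ) := by linarith
  have hn1 : (0 : ℝ) < (n : ℝ) - 1 := by linarith
  obtain ⟨cc, hcc⟩ : ∃ x:ℝ, x = Real.cos (k * π / (n + 1)) := ⟨_, rfl⟩
  have hq : 0 < 1 / (n : ℝ) + 2 / ((n : ℝ) - 1) * cc ^ 2 := by
    have h2 : 0 ≤ 2 / ((n : ℝ) - 1) * cc ^ 2 := by positivity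
    have h3 : 0 < 1 / (n : ℝ) := by positivity
    linarith
  have hD : (0 : ℝ) < (n : ℝ) - 1 + 2 * n * cc ^ 2 := by nlinarith [sq_nonneg cc]
  rw [kap, ← Real.sqrt_sq_eq_abs, ← Real.sqrt_div (sq_nonneg _), ← hcc]
  congr 1
  field_simp

lemma sqrt_eq_imp (x y : ℝ) (hx : 0 ≤ x) (hy : 0 ≤ y)
    (h : Real.sqrt x = Real.sqrt y) : x = y := by
  rw [← Real.sq_sqrt hx, ← Real.sq_sqrt hy, h]

lemma Dpos (N c : ℝ) (hN : 2 ≤ N) : 0 < N - 1 + 2 * N * c ^ 2 := by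
  nlinarith [sq_nonneg c]

lemma sq_sum_zero (N a b : ℝ) (hN : 2 ≤ N)
    (hz : N * a ^ 2 + 2 * (N - 1) * b ^ 2 = 0) : a = 0 ∧ b = 0 := by
  constructor
  · nlinarith [sq_nonneg a, sq_nonneg b]
  · nlinarith [sq_nonneg a, sq_nonneg b]

set_option maxHeartbeats 1000000

/-- if `h` is the strict minimizer of `|λ_k|/κ(k)`, then `S*^𝒯 = (n; δ*, σ*)` is the
UNIQUE closest singular symmetric tridiagonal Toeplitz matrix to `T` in the Frobenius norm:
any `S ∈ 𝒮 ∩ 𝒯` at distance `|λ_h|/κ(h)` equals `S*^𝒯`, and every other `S ∈ 𝒮 ∩ 𝒯` is strictly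
farther away. -/
theorem stmt_8 (n : ℕ) (hn : 2 ≤ n) (δ σ : ℝ) (hσ : σ ≠ 0)
    (h : ℕ) (h1 : 1 ≤ h) (hh : h ≤ n)
    (hmin : ∀ k : ℕ, 1 ≤ k → k ≤ n → k ≠ h →
      |lam n δ σ h| / kap n h < |lam n δ σ k| / kap n k)
    (c δs σs : ℝ) (hc : c = Real.cos (h * Real.pi / (n + 1)))
    (hδs : δs = 2 * ((n : ℝ) * c ^ 2 * δ - ((n : ℝ) - 1) * c * σ) /
      ((n : ℝ) - 1 + 2 * (n : ℝ) * c ^ 2))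
    (hσs : σs = (((n : ℝ) - 1) * σ - (n : ℝ) * c * δ) /
      ((n : ℝ) - 1 + 2 * (n : ℝ) * c ^ 2)) :
    (tridiag n δs σs).det = 0 ∧
    frobNorm (tridiag n δ σ - tridiag n δs σs) = |lam n δ σ h| / kap n h ∧
    (∀ S : Matrix (Fin n) (Fin n) ℝ, S.det = 0 → (∃ d s : ℝ, S = tridiag n d s) →
      (frobNorm (tridiag n δ σ - S) = |lam n δ σ h| / kap n h → S = tridiag n δs σs) ∧
      (S ≠ tridiag n δs σs → |lam n δ σ h| / kap n h < frobNorm (tridiag n δ σ - S))) := by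
  have hnR : (2 : ℝ) ≤ (n : ℝ) := by exact_mod_cast hn
  have hn0 : (0 : ℝ) ≤ (n : ℝ) := by linarith
  have hn1' : (0 : ℝ) ≤ (n : ℝ) - 1 := by linarith
  have hD : (0 : ℝ) < (n : ℝ) - 1 + 2 * n * c ^ 2 := Dpos (n : ℝ) c hnR
  have hline_star : δs + 2 * c * σs = 0 := by
    rw [hδs, hσs]
    field_simp
    ring
  -- Part 1
  have hmul : tridiag n δs σs *ᵥ evec n h = 0 := by
    rw [tridiag_mulVec, ← hc, show δs + 2 * σs * c = 0 by linarith, zero_smul]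
  have part1 : (tridiag n δs σs).det = 0 :=
    Matrix.exists_mulVec_eq_zero_iff.1
      ⟨evec n h, evec_ne_zero n h (by omega) h1 hh, hmul⟩
  -- Part 2
  obtain ⟨t2, ht2⟩ : ∃ x : ℝ,
      x = (lam n δ σ h) ^ 2 * n * ((n : ℝ) - 1) / ((n : ℝ) - 1 + 2 * n * c ^ 2) := ⟨_, rfl⟩
  have htarget : |lam n δ σ h| / kap n h = Real.sqrt t2 := by
    rw [target_eq n h hn δ σ, ← hc, ht2]
  have ht2nonneg : 0 ≤ t2 := by
    rw [ht2]
    exact div_nonneg (mul_nonneg (mul_nonneg (sq_nonneg _) hn0) hn1') (le_of_lt hD)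
  have hlamh : lam n δ σ h = δ + 2 * σ * c := by rw [lam, ← hc]
  have part2 : frobNorm (tridiag n δ σ - tridiag n δs σs) = |lam n δ σ h| / kap n h := by
    rw [htarget, tridiag_sub, frobNorm, sum_sq_tridiag n (by omega)]
    congr 1
    have hq := quad_decomp (n : ℝ) c δ σ δs σs δs σs hD.ne' hδs hσs hline_star
    rw [hq, ht2, hlamh]
    ring
  refine ⟨part1, part2, ?_⟩
  rintro S hSdet ⟨d, s, rfl⟩
  obtain ⟨k, hk1, hkn, hkline⟩ := singular_line n hn d s hSdet
  push_cast at hkline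
  obtain ⟨ck, hck⟩ : ∃ x : ℝ, x = Real.cos ((k : ℝ) * π / ((n : ℝ) + 1)) := ⟨_, rfl⟩
  have hDk : (0 : ℝ) < (n : ℝ) - 1 + 2 * n * ck ^ 2 := Dpos (n : ℝ) ck hnR
  have hlinek : d + 2 * ck * s = 0 := by rw [hck]; linear_combination hkline
  obtain ⟨E, hEdef⟩ : ∃ x : ℝ,
      x = (n : ℝ) * (δ - d) ^ 2 + 2 * ((n : ℝ) - 1) * (σ - s) ^ 2 := ⟨_, rfl⟩
  obtain ⟨δk, hδk⟩ : ∃ x : ℝ,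
      x = 2 * ((n : ℝ) * ck ^ 2 * δ - ((n : ℝ) - 1) * ck * σ)
        / ((n : ℝ) - 1 + 2 * n * ck ^ 2) := ⟨_, rfl⟩
  obtain ⟨σk, hσk⟩ : ∃ x : ℝ,
      x = (((n : ℝ) - 1) * σ - (n : ℝ) * ck * δ)
        / ((n : ℝ) - 1 + 2 * n * ck ^ 2) := ⟨_, rfl⟩
  have hex1 : (0 : ℝ) ≤ (n : ℝ) * (δk - d) ^ 2 := mul_nonneg hn0 (sq_nonneg _)
  have hex2 : (0 : ℝ) ≤ 2 * ((n : ℝ) - 1) * (σk - s) ^ 2 :=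
    mul_nonneg (by linarith) (sq_nonneg _)
  have hE : E = (lam n δ σ k) ^ 2 * n * ((n : ℝ) - 1) / ((n : ℝ) - 1 + 2 * n * ck ^ 2)
      + ((n : ℝ) * (δk - d) ^ 2 + 2 * ((n : ℝ) - 1) * (σk - s) ^ 2) := by
    have hq := quad_decomp (n : ℝ) ck δ σ d s δk σk hDk.ne' hδk hσk hlinek
    have hlamk : lam n δ σ k = δ + 2 * σ * ck := by rw [lam, hck]
    rw [hEdef, hq, hlamk]
    ring
  have hFrob : frobNorm (tridiag n δ σ - tridiag n d s) = Real.sqrt E := by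
    rw [tridiag_sub, frobNorm, sum_sq_tridiag n (by omega), hEdef]
  have htk : |lam n δ σ k| / kap n k
      = Real.sqrt ((lam n δ σ k) ^ 2 * n * ((n : ℝ) - 1)
        / ((n : ℝ) - 1 + 2 * n * ck ^ 2)) := by
    rw [target_eq n k hn δ σ, ← hck]
  by_cases hkh : k = h
  · subst hkh
    have hcck : ck = c := by rw [hck, hc]
    have hδkδs : δk = δs := by rw [hδk, hcck, ← hδs]
    have hσkσs : σk = σs := by rw [hσk, hcck, ← hσs]
    have hEt : E = t2 + ((n : ℝ) * (δs - d) ^ 2 + 2 * ((n : ℝ) - 1) * (σs - s) ^ 2) := by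
      rw [hE, hδkδs, hσkσs, hcck, ht2]
    have hex1' : (0 : ℝ) ≤ (n : ℝ) * (δs - d) ^ 2 := hδkδs ▸ hex1
    have hex2' : (0 : ℝ) ≤ 2 * ((n : ℝ) - 1) * (σs - s) ^ 2 := hσkσs ▸ hex2
    have hE0 : 0 ≤ E := by
      rw [hEt]; exact add_nonneg ht2nonneg (add_nonneg hex1' hex2')
    have hclause1 : frobNorm (tridiag n δ σ - tridiag n d s) = |lam n δ σ k| / kap n k
        → tridiag n d s = tridiag n δs σs := by
      intro heq
      rw [hFrob, htarget] at heq
      have hEt2 : E = t2 := sqrt_eq_imp E t2 hE0 ht2nonneg heq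
      have h' : t2 = t2 + ((n : ℝ) * (δs - d) ^ 2 + 2 * ((n : ℝ) - 1) * (σs - s) ^ 2) := by
        rw [← hEt, hEt2]
      have hzero : (n : ℝ) * (δs - d) ^ 2 + 2 * ((n : ℝ) - 1) * (σs - s) ^ 2 = 0 :=
        (left_eq_add.mp h')
      obtain ⟨ha0, hb0⟩ := sq_sum_zero (n : ℝ) (δs - d) (σs - s) hnR hzero
      have hd' : d = δs := by linarith [ha0]
      have hs' : s = σs := by linarith [hb0]
      rw [hd', hs']
    refine ⟨hclause1, ?_⟩
    intro hne
    have hle' : |lam n δ σ k| / kap n k ≤ frobNorm (tridiag n δ σ - tridiag n d s) := by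
      rw [hFrob, htarget]
      apply Real.sqrt_le_sqrt
      rw [hEt]
      exact le_add_of_nonneg_right (add_nonneg hex1' hex2')
    rcases lt_or_eq_of_le hle' with hlt | heqq
    · exact hlt
    · exact absurd (hclause1 heqq.symm) hne
  · have hstrict : |lam n δ σ h| / kap n h < frobNorm (tridiag n δ σ - tridiag n d s) := by
      calc |lam n δ σ h| / kap n h < |lam n δ σ k| / kap n k := hmin k hk1 hkn hkh
        _ = Real.sqrt ((lam n δ σ k) ^ 2 * n * ((n : ℝ) - 1)
            / ((n : ℝ) - 1 + 2 * n * ck ^ 2)) := htk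
        _ ≤ Real.sqrt E := by
            apply Real.sqrt_le_sqrt
            rw [hE]
            exact le_add_of_nonneg_right (add_nonneg hex1 hex2)
        _ = frobNorm (tridiag n δ σ - tridiag n d s) := hFrob.symm
    exact ⟨fun heq => absurd heq.symm (ne_of_lt hstrict), fun _ => hstrict⟩
end

section
/- Suppose σ ≠ 0. The unstructured distance to singularity of T in the Frobenius norm satisfies d_F(T) = min_{S ∈ 𝒮} ‖T − S‖_F = min_{h=1,…,n} |λ_h|, and the structured distance to singularity satisfies the sandwich bound min_{h=1,…,n} |λ_h| = d_F(T) ≤ d_F^𝒯(T) = min_{S ∈ 𝒮 ∩ 𝒯} ‖T − S‖_F ≤ min_{h=1,…,n} |λ_h|/κ(h). -/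
open Real Filter

lemma cos_telescope (n : ℕ) (m : ℤ) (hm : Real.sin (m * π / (2*(n+1))) ≠ 0) :
    ∑ k ∈ Finset.range n, Real.cos ((k+1) * (m * π / (n+1))) = -(1 + Real.cos (m*π))/2 := by
  set θ : ℝ := m * π / (n+1) with hθ
  have h2 : Real.sin (θ/2) ≠ 0 := by
    have e : θ/2 = m * π / (2*(n+1)) := by rw [hθ, div_div]; ring_nf
    rwa [e]
  have key : ∀ k : ℕ, Real.cos ((k+1) * θ) * (2 * Real.sin (θ/2)) =
      Real.sin ((k+1)*θ + θ/2) - Real.sin ((k)*θ + θ/2) := by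
    intro k
    have e1 : ((k:ℝ)+1)*θ + θ/2 = ((k+1)*θ) + θ/2 := by ring
    have e2 : (k:ℝ)*θ + θ/2 = ((k+1)*θ) - θ/2 := by ring
    rw [e1, e2, Real.sin_add, Real.sin_sub]
    ring
  have tel : (∑ k ∈ Finset.range n, Real.cos ((k+1) * θ)) * (2 * Real.sin (θ/2)) =
      Real.sin (n*θ + θ/2) - Real.sin (θ/2) := by
    rw [Finset.sum_mul]
    have := Finset.sum_range_sub (fun k => Real.sin (k*θ + θ/2)) n
    simp only [Nat.cast_add, Nat.cast_one] at this ⊢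
    rw [Finset.sum_congr rfl (fun k _ => key k), this]
    norm_num
  have hend : (n:ℝ)*θ + θ/2 = m*π - θ/2 := by
    rw [hθ]; field_simp; ring
  rw [hend] at tel
  have hsin : Real.sin (m*π - θ/2) = -Real.cos (m*π) * Real.sin (θ/2) := by
    rw [Real.sin_sub, Real.sin_int_mul_pi]; ring
  rw [hsin] at tel
  have key2 : (∑ k ∈ Finset.range n, Real.cos ((k+1) * θ)) * (2 * Real.sin (θ/2)) =
      (-(1 + Real.cos (m*π))/2) * (2 * Real.sin (θ/2)) := by rw [tel]; ring
  have h2' : (2 : ℝ) * Real.sin (θ/2) ≠ 0 := by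
    simp [h2]
  exact mul_right_cancel₀ h2' key2

lemma sin_pos_nat (n u : ℕ) (h0 : 0 < u) (h1 : u < 2*(n+1)) :
    Real.sin ((u:ℝ)*π/(2*(n+1))) > 0 := by
  apply Real.sin_pos_of_pos_of_lt_pi
  · have : (0:ℝ) < (u : ℝ) := by exact_mod_cast h0
    positivity
  · rw [div_lt_iff₀ (by positivity)]
    have : (u : ℝ) < 2*(n+1) := by exact_mod_cast h1
    nlinarith [Real.pi_pos]

lemma sin_ne_zero_of (n : ℕ) (m : ℤ) (h0 : m ≠ 0) (h1 : m.natAbs < 2*(n+1)) :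
    Real.sin (m*π/(2*(n+1))) ≠ 0 := by
  obtain ⟨u, hu | hu⟩ : ∃ u:ℕ, m = u ∨ m = -u := ⟨m.natAbs, Int.natAbs_eq m⟩
  all_goals subst hu
  · have := sin_pos_nat n u (by omega) (by simpa using h1)
    push_cast
    exact ne_of_gt this
  · have := sin_pos_nat n u (by omega) (by simpa using h1)
    push_cast
    rw [show -(u:ℝ) * π / (2 * (↑n + 1)) = -((u:ℝ) * π / (2 * (↑n + 1))) by ring,
      Real.sin_neg]
    exact neg_ne_zero.mpr (ne_of_gt this)

lemma sin_orthog (n : ℕ) (a b : ℕ) (ha : 1 ≤ a) (ha' : a ≤ n) (hb : 1 ≤ b) (hb' : b ≤ n) :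
    ∑ k ∈ Finset.range n, Real.sin (a*(k+1)*π/(n+1)) * Real.sin (b*(k+1)*π/(n+1)) =
      if a = b then ((n:ℝ)+1)/2 else 0 := by
  have prodsum : ∀ k : ℕ, Real.sin (a*(k+1)*π/(n+1)) * Real.sin (b*(k+1)*π/(n+1)) =
      (Real.cos ((k+1) * (((a:ℝ) - b) * π / (n+1)))
        - Real.cos ((k+1) * (((a:ℝ) + b) * π / (n+1)))) / 2 := by
    intro k
    have e1 : ((k:ℝ)+1) * (((a:ℝ) - b) * π / (n+1)) =
        a*(k+1)*π/(n+1) - b*(k+1)*π/(n+1) := by ring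
    have e2 : ((k:ℝ)+1) * (((a:ℝ) + b) * π / (n+1)) =
        a*(k+1)*π/(n+1) + b*(k+1)*π/(n+1) := by ring
    rw [e1, e2, Real.cos_sub, Real.cos_add]
    ring
  rw [Finset.sum_congr rfl (fun k _ => prodsum k), ← Finset.sum_div,
    Finset.sum_sub_distrib]
  have hsum2 : ∑ k ∈ Finset.range n, Real.cos ((k+1) * (((a:ℝ) + b) * π / (n+1)))
      = -(1 + Real.cos (((a:ℝ)+b)*π))/2 := by
    have H := cos_telescope n ((a:ℤ)+b) (by
      apply sin_ne_zero_of n _ (by omega)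
      rw [Int.natAbs_add_of_nonneg (by positivity) (by positivity)]
      simp only [Int.natAbs_natCast]
      omega)
    push_cast at H
    exact H
  by_cases hab : a = b
  · subst hab
    simp only [if_pos rfl]
    have h1 : ∀ k ∈ Finset.range n, Real.cos ((k+1) * (((a:ℝ) - a) * π / (n+1))) = 1 := by
      intro k _; simp
    rw [Finset.sum_congr rfl h1, hsum2, Finset.sum_const, Finset.card_range]
    have hc : Real.cos (((a:ℝ)+a)*π) = 1 := by
      have e : (((a:ℝ)+a))*π = ((a:ℤ):ℝ) * (2*π) := by push_cast; ring
      rw [e, Real.cos_int_mul_two_pi]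
    rw [hc]
    simp
  · simp only [if_neg hab]
    have hsum1 : ∑ k ∈ Finset.range n, Real.cos ((k+1) * (((a:ℝ) - b) * π / (n+1)))
        = -(1 + Real.cos (((a:ℝ)-b)*π))/2 := by
      have H := cos_telescope n ((a:ℤ)-b) (by
        apply sin_ne_zero_of n _ (by omega)
        have : ((a:ℤ)-b).natAbs ≤ n := by omega
        omega)
      push_cast at H
      exact H
    rw [hsum1, hsum2]
    have hc : Real.cos (((a:ℝ)+b)*π) = Real.cos (((a:ℝ)-b)*π) := by
      have e : ((a:ℝ)+b)*π = ((a:ℝ)-b)*π + ((b:ℤ):ℝ)*(2*π) := by push_cast; ring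
      rw [e, Real.cos_add_int_mul_two_pi]
    rw [hc]
    ring


lemma sum_fin_ite {n : ℕ} (m : ℕ) (g : Fin n → ℝ) :
    (∑ j : Fin n, if m = (j:ℕ) then g j else 0) = if h : m < n then g ⟨m, h⟩ else 0 := by
  split_ifs with h
  · rw [Finset.sum_eq_single ⟨m, h⟩]
    · simp
    · intro b _ hb
      rw [if_neg]
      intro e
      exact hb (by simp [Fin.ext_iff, ← e])
    · intro hb; exact absurd (Finset.mem_univ _) hb
  · apply Finset.sum_eq_zero
    intro j _
    rw [if_neg]
    intro e
    exact h (e ▸ j.isLt)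

lemma tridiag_entry_split {n : ℕ} (d s : ℝ) (i j : Fin n) (f : Fin n → ℝ) :
    tridiag n d s i j * f j =
      (if (i:ℕ) = (j:ℕ) then d * f j else 0)
      + (if (i:ℕ)+1 = (j:ℕ) then s * f j else 0)
      + (if (j:ℕ)+1 = (i:ℕ) then s * f j else 0) := by
  simp only [tridiag, Matrix.of_apply]
  split_ifs <;> first | omega | ring

lemma tridiag_mulVec_s9 {n : ℕ} (d s : ℝ) (v : Fin n → ℝ) (i : Fin n) :
    (tridiag n d s).mulVec v i =
      d * v i + (if h : (i:ℕ)+1 < n then s * v ⟨(i:ℕ)+1, h⟩ else 0)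
        + (if h : 1 ≤ (i:ℕ) then s * v ⟨(i:ℕ)-1, Nat.lt_of_le_of_lt (Nat.sub_le _ _) i.isLt⟩
            else 0) := by
  unfold Matrix.mulVec dotProduct
  rw [Finset.sum_congr rfl (fun j _ => tridiag_entry_split d s i j v)]
  rw [Finset.sum_add_distrib, Finset.sum_add_distrib]
  congr 1
  · congr 1
    · rw [sum_fin_ite (i:ℕ) (fun j => d * v j), dif_pos i.isLt]
    · rw [sum_fin_ite ((i:ℕ)+1) (fun j => s * v j)]
  · by_cases h : 1 ≤ (i:ℕ)
    · rw [dif_pos h]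
      have : ∀ j : Fin n, (if (j:ℕ)+1 = (i:ℕ) then s * v j else 0)
          = (if (i:ℕ)-1 = (j:ℕ) then s * v j else 0) := by
        intro j; congr 1; simp only [eq_iff_iff]; omega
      rw [Finset.sum_congr rfl (fun j _ => this j),
        sum_fin_ite ((i:ℕ)-1) (fun j => s * v j),
        dif_pos (Nat.lt_of_le_of_lt (Nat.sub_le _ _) i.isLt)]
    · rw [dif_neg h]
      apply Finset.sum_eq_zero
      intro j _
      rw [if_neg]
      omega

lemma tridiag_evec (n : ℕ) (d s : ℝ) (a : ℕ) (k : Fin n) :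
    (tridiag n d s).mulVec (evec n a) k
      = (d + 2*s*Real.cos (a*π/(n+1))) * evec n a k := by
  set u : ℕ → ℝ := fun k => Real.sqrt (2/(n+1)) * Real.sin (a * k * π/(n+1)) with hu
  have hun : u (n+1) = 0 := by
    have e : (a:ℝ) * ((n:ℝ)+1) * π / ((n:ℝ)+1) = (a:ℝ) * π := by field_simp
    simp only [hu]
    push_cast
    rw [e, Real.sin_nat_mul_pi, mul_zero]
  have hrec : ∀ m : ℕ, u m + u (m+2) = 2 * Real.cos (a*π/(n+1)) * u (m+1) := by
    intro m
    have h1 : (a:ℝ)*(m:ℕ)*π/(n+1) = ((a:ℝ)*(↑(m+1))*π/(n+1)) - a*π/(n+1) := by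
      push_cast; ring
    have h2 : (a:ℝ)*(↑(m+2))*π/(n+1) = ((a:ℝ)*(↑(m+1))*π/(n+1)) + a*π/(n+1) := by
      push_cast; ring
    simp only [hu]
    rw [h1, h2, Real.sin_sub, Real.sin_add]
    ring
  have he : ∀ j : Fin n, evec n a j = u ((j:ℕ)+1) := by
    intro j
    simp only [hu, evec]
    push_cast
    ring_nf
  rw [tridiag_mulVec_s9]
  have hd1 : (if h : (k:ℕ)+1 < n then s * evec n a ⟨(k:ℕ)+1, h⟩ else 0) = s * u ((k:ℕ)+2) := by
    split_ifs with h
    · rw [he ⟨(k:ℕ)+1, h⟩]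
    · have hk : (k:ℕ)+2 = n+1 := by omega
      rw [hk, hun, mul_zero]
  have hd2 : (if h : 1 ≤ (k:ℕ) then
        s * evec n a ⟨(k:ℕ)-1, Nat.lt_of_le_of_lt (Nat.sub_le _ _) k.isLt⟩ else 0)
      = s * u (k:ℕ) := by
    split_ifs with h
    · rw [he ⟨(k:ℕ)-1, _⟩]
      have e2 : ((⟨(k:ℕ)-1, Nat.lt_of_le_of_lt (Nat.sub_le _ _) k.isLt⟩ : Fin n) : ℕ) + 1
          = (k:ℕ) := by
        simp only [Fin.val_mk]; omega
      rw [e2]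
    · have hk : (k:ℕ) = 0 := by omega
      rw [hk, hu]; simp
  rw [hd1, hd2, he k]
  linear_combination s * hrec (k:ℕ)

lemma evec_dot (n : ℕ) (a b : ℕ) (ha : 1 ≤ a) (ha' : a ≤ n) (hb : 1 ≤ b) (hb' : b ≤ n) :
    ∑ k : Fin n, evec n a k * evec n b k = if a = b then 1 else 0 := by
  have hC : Real.sqrt (2/((n:ℝ)+1)) * Real.sqrt (2/((n:ℝ)+1)) = 2/((n:ℝ)+1) :=
    Real.mul_self_sqrt (by positivity)
  have step : ∀ k : Fin n, evec n a k * evec n b k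
      = (2/((n:ℝ)+1)) * (Real.sin (a*((k:ℕ)+1)*π/(n+1)) * Real.sin (b*((k:ℕ)+1)*π/(n+1))) := by
    intro k
    have e : evec n a k * evec n b k
        = (Real.sqrt (2/((n:ℝ)+1)) * Real.sqrt (2/((n:ℝ)+1)))
          * (Real.sin (a*((k:ℕ)+1)*π/(n+1)) * Real.sin (b*((k:ℕ)+1)*π/(n+1))) := by
      simp only [evec]; ring
    rw [e, hC]
  rw [Finset.sum_congr rfl (fun k _ => step k), ← Finset.mul_sum]
  rw [Fin.sum_univ_eq_sum_range
    (fun k => Real.sin (a*((k:ℕ)+1)*π/(n+1)) * Real.sin (b*((k:ℕ)+1)*π/(n+1))) n]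
  rw [sin_orthog n a b ha ha' hb hb']
  split_ifs
  · rw [div_mul_div_comm]
    rw [div_eq_one_iff_eq (by positivity)]
    ring
  · rw [mul_zero]

open Matrix

noncomputable def Pmat (n : ℕ) : Matrix (Fin n) (Fin n) ℝ :=
  Matrix.of fun h k => evec n ((h:ℕ)+1) k

lemma Pmat_mul_transpose (n : ℕ) : Pmat n * (Pmat n)ᵀ = 1 := by
  ext h l
  simp only [Matrix.mul_apply, Matrix.transpose_apply, Pmat, Matrix.of_apply,
    Matrix.one_apply]
  rw [show (∑ k, evec n ((h:ℕ)+1) k * evec n ((l:ℕ)+1) k)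
      = if (h:ℕ)+1 = (l:ℕ)+1 then 1 else 0 from
    evec_dot n _ _ (by omega) (by omega) (by omega) (by omega)]
  congr 1
  simp only [eq_iff_iff, Fin.ext_iff]
  omega

lemma Pmat_transpose_mul (n : ℕ) : (Pmat n)ᵀ * Pmat n = 1 :=
  mul_eq_one_comm.mp (Pmat_mul_transpose n)

lemma tridiag_decomp (n : ℕ) (d s : ℝ) :
    tridiag n d s = (Pmat n)ᵀ *
      Matrix.diagonal (fun h : Fin n => d + 2*s*Real.cos (((h:ℕ)+1)*π/(n+1))) * Pmat n := by
  have key : tridiag n d s * (Pmat n)ᵀ = (Pmat n)ᵀ *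
      Matrix.diagonal (fun h : Fin n => d + 2*s*Real.cos (((h:ℕ)+1)*π/(n+1))) := by
    ext i h
    rw [Matrix.mul_diagonal]
    simp only [Matrix.mul_apply, Matrix.transpose_apply, Pmat, Matrix.of_apply]
    have h2 := tridiag_evec n d s ((h:ℕ)+1) i
    push_cast at h2
    rw [show (∑ j, tridiag n d s i j * evec n ((h:ℕ)+1) j)
        = (tridiag n d s).mulVec (evec n ((h:ℕ)+1)) i from rfl, h2]
    ring
  calc tridiag n d s = tridiag n d s * ((Pmat n)ᵀ * Pmat n) := by
        rw [Pmat_transpose_mul, Matrix.mul_one]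
    _ = (tridiag n d s * (Pmat n)ᵀ) * Pmat n := by rw [Matrix.mul_assoc]
    _ = _ := by rw [key]

lemma tridiag_det (n : ℕ) (d s : ℝ) :
    (tridiag n d s).det = ∏ h : Fin n, (d + 2*s*Real.cos (((h:ℕ)+1)*π/(n+1))) := by
  rw [tridiag_decomp n d s, Matrix.det_mul, Matrix.det_mul]
  have h1 : (Pmat n)ᵀ.det * (Pmat n).det = 1 := by
    rw [← Matrix.det_mul, Pmat_transpose_mul, Matrix.det_one]
  rw [show (Pmat n)ᵀ.det *
      (Matrix.diagonal fun h : Fin n => d + 2*s*Real.cos (((h:ℕ)+1)*π/(n+1))).det *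
      (Pmat n).det = ((Pmat n)ᵀ.det * (Pmat n).det) *
      (Matrix.diagonal fun h : Fin n => d + 2*s*Real.cos (((h:ℕ)+1)*π/(n+1))).det from by ring,
    h1, one_mul, Matrix.det_diagonal]

lemma count_sum1 (n : ℕ) (x : ℝ) :
    (∑ k ∈ Finset.range n, if k+1 < n then x else 0) = (↑(n-1) : ℝ) * x := by
  rw [Finset.sum_ite, Finset.sum_const, Finset.sum_const_zero, add_zero]
  have e : Finset.filter (fun k => k+1 < n) (Finset.range n) = Finset.range (n-1) := by
    ext k; simp only [Finset.mem_filter, Finset.mem_range]; omega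
  rw [e, Finset.card_range, nsmul_eq_mul]

lemma count_sum2 (n : ℕ) (x : ℝ) :
    (∑ k ∈ Finset.range n, if 1 ≤ k then x else 0) = (↑(n-1) : ℝ) * x := by
  rw [Finset.sum_ite, Finset.sum_const, Finset.sum_const_zero, add_zero]
  have e : Finset.filter (fun k => 1 ≤ k) (Finset.range n) = Finset.Ico 1 n := by
    ext k; simp only [Finset.mem_filter, Finset.mem_range, Finset.mem_Ico]; omega
  rw [e, Nat.card_Ico, nsmul_eq_mul]

lemma tridiag_sq_entry {n : ℕ} (a b : ℝ) (i j : Fin n) :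
    (tridiag n a b i j)^2 = tridiag n (a^2) (b^2) i j := by
  simp only [tridiag, Matrix.of_apply]
  split_ifs <;> ring

lemma tridiag_frob_sq (n : ℕ) (a b : ℝ) :
    ∑ i, ∑ j, (tridiag n a b i j)^2 = n * a^2 + 2*(↑(n-1):ℝ) * b^2 := by
  have inner : ∀ i : Fin n, ∑ j, (tridiag n a b i j)^2
      = a^2 + ((if (i:ℕ)+1 < n then b^2 else 0) + (if 1 ≤ (i:ℕ) then b^2 else 0)) := by
    intro i
    rw [Finset.sum_congr rfl (fun j _ => tridiag_sq_entry a b i j)]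
    have := tridiag_mulVec_s9 (a^2) (b^2) (fun _ => (1:ℝ)) i
    unfold Matrix.mulVec dotProduct at this
    simp only [mul_one] at this
    rw [this]
    have e1 : (if h : (i:ℕ)+1 < n then b^2 else 0) = (if (i:ℕ)+1 < n then b^2 else 0) := by
      split_ifs <;> rfl
    have e2 : (if h : 1 ≤ (i:ℕ) then b^2 else 0) = (if 1 ≤ (i:ℕ) then b^2 else 0) := by
      split_ifs <;> rfl
    rw [e1, e2]
    ring
  rw [Finset.sum_congr rfl (fun i _ => inner i), Finset.sum_add_distrib,
    Finset.sum_add_distrib, Finset.sum_const, Finset.card_univ, Fintype.card_fin,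
    nsmul_eq_mul]
  rw [Fin.sum_univ_eq_sum_range (fun k => if k+1 < n then b^2 else 0) n,
    Fin.sum_univ_eq_sum_range (fun k => if 1 ≤ k then b^2 else 0) n,
    count_sum1, count_sum2]
  ring

open Matrix in
lemma orth_mulVec_dot {n : ℕ} (A : Matrix (Fin n) (Fin n) ℝ) (hA : Aᵀ * A = 1)
    (x : Fin n → ℝ) : (A.mulVec x) ⬝ᵥ (A.mulVec x) = x ⬝ᵥ x := by
  rw [dotProduct_mulVec, ← Matrix.mulVec_transpose, Matrix.mulVec_mulVec, hA,
    Matrix.one_mulVec]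

open Matrix in
lemma frob_vec_bound {n : ℕ} (A : Matrix (Fin n) (Fin n) ℝ) (v : Fin n → ℝ) :
    (A.mulVec v) ⬝ᵥ (A.mulVec v) ≤ (∑ i, ∑ j, A i j ^2) * (v ⬝ᵥ v) := by
  unfold Matrix.mulVec dotProduct
  rw [Finset.sum_mul]
  apply Finset.sum_le_sum
  intro i _
  have cs := Finset.sum_mul_sq_le_sq_mul_sq Finset.univ (fun j => A i j) v
  calc (∑ j, A i j * v j) * (∑ j, A i j * v j) = (∑ j, A i j * v j)^2 := by ring
    _ ≤ (∑ j, A i j ^2) * (∑ j, v j ^2) := cs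
    _ = (∑ j, A i j ^2) * (∑ j, v j * v j) := by
        congr 1; exact Finset.sum_congr rfl (fun j _ => by ring)

open Matrix in
lemma spectral_lb (n : ℕ) (δ σ : ℝ) (m : ℝ) (hm0 : 0 ≤ m)
    (hm : ∀ h : Fin n, m ≤ |δ + 2*σ*Real.cos (((h:ℕ)+1)*π/(n+1))|)
    (v : Fin n → ℝ) :
    m^2 * (v ⬝ᵥ v) ≤ ((tridiag n δ σ).mulVec v) ⬝ᵥ ((tridiag n δ σ).mulVec v) := by
  set μ : Fin n → ℝ := fun h => δ + 2*σ*Real.cos (((h:ℕ)+1)*π/(n+1)) with hμ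
  set y : Fin n → ℝ := (Pmat n).mulVec v with hy
  have hTv : (tridiag n δ σ).mulVec v = (Pmat n)ᵀ.mulVec ((Matrix.diagonal μ).mulVec y) := by
    rw [hy, Matrix.mulVec_mulVec, Matrix.mulVec_mulVec, tridiag_decomp n δ σ]
  have hPt : ((Pmat n)ᵀ)ᵀ * (Pmat n)ᵀ = 1 := by
    rw [Matrix.transpose_transpose, Pmat_mul_transpose]
  rw [hTv, orth_mulVec_dot _ hPt]
  have hdiag : ∀ h : Fin n, (Matrix.diagonal μ).mulVec y h = μ h * y h := by
    intro h; rw [Matrix.mulVec_diagonal]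
  have hyv : y ⬝ᵥ y = v ⬝ᵥ v := orth_mulVec_dot (Pmat n) (Pmat_transpose_mul n) v
  calc m^2 * (v ⬝ᵥ v) = m^2 * (y ⬝ᵥ y) := by rw [hyv]
    _ = ∑ h, m^2 * (y h * y h) := by
        unfold dotProduct; rw [Finset.mul_sum]
    _ ≤ ∑ h, ((Matrix.diagonal μ).mulVec y h) * ((Matrix.diagonal μ).mulVec y h) := by
        apply Finset.sum_le_sum
        intro h _
        rw [hdiag h]
        have h1 : m^2 ≤ (μ h)^2 := by
          calc m^2 ≤ |μ h|^2 := by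
                apply pow_le_pow_left₀ hm0 (hm h)
            _ = (μ h)^2 := sq_abs _
        nlinarith [sq_nonneg (y h), sq_nonneg (μ h * y h)]
    _ = _ := rfl

open Matrix in
lemma part1_lb (n : ℕ) (hn : 2 ≤ n) (δ σ : ℝ) (ne : (Finset.Icc 1 n).Nonempty)
    (S : Matrix (Fin n) (Fin n) ℝ) (hS : S.det = 0) :
    (Finset.Icc 1 n).inf' ne (fun h => |lam n δ σ h|) ≤ frobNorm (tridiag n δ σ - S) := by
  set m := (Finset.Icc 1 n).inf' ne (fun h => |lam n δ σ h|) with hm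
  have hm0 : 0 ≤ m := Finset.le_inf' ne _ (fun h _ => abs_nonneg _)
  obtain ⟨v, hv0, hSv⟩ := Matrix.exists_mulVec_eq_zero_iff.mpr hS
  have hvpos : 0 < v ⬝ᵥ v := by
    obtain ⟨k, hk⟩ := Function.ne_iff.mp hv0
    have hk' : (0:ℝ) < v k * v k := by
      have := mul_self_nonneg (v k)
      rcases this.lt_or_eq with h | h
      · exact h
      · exact absurd (mul_self_eq_zero.mp h.symm) (by simpa using hk)
    exact Finset.sum_pos' (fun j _ => mul_self_nonneg _) ⟨k, Finset.mem_univ k, hk'⟩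
  have hmle : ∀ h : Fin n, m ≤ |δ + 2*σ*Real.cos (((h:ℕ)+1)*π/(n+1))| := by
    intro h
    have hmem : (h:ℕ)+1 ∈ Finset.Icc 1 n := by
      simp only [Finset.mem_Icc]; exact ⟨by omega, by omega⟩
    have := Finset.inf'_le (fun a => |lam n δ σ a|) hmem
    rw [← hm] at this
    convert this using 3
    · rfl
    simp only [lam]
    push_cast
    ring_nf
  have hAv : (tridiag n δ σ - S).mulVec v = (tridiag n δ σ).mulVec v := by
    rw [Matrix.sub_mulVec, hSv, sub_zero]
  have hchain : m^2 * (v ⬝ᵥ v) ≤ (∑ i, ∑ j, (tridiag n δ σ - S) i j ^2) * (v ⬝ᵥ v) := by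
    calc m^2 * (v ⬝ᵥ v) ≤ ((tridiag n δ σ).mulVec v) ⬝ᵥ ((tridiag n δ σ).mulVec v) :=
          spectral_lb n δ σ m hm0 hmle v
      _ = ((tridiag n δ σ - S).mulVec v) ⬝ᵥ ((tridiag n δ σ - S).mulVec v) := by rw [hAv]
      _ ≤ _ := frob_vec_bound _ v
  have hsq : m^2 ≤ ∑ i, ∑ j, (tridiag n δ σ - S) i j ^2 :=
    le_of_mul_le_mul_right hchain hvpos
  calc m = Real.sqrt (m^2) := by rw [Real.sqrt_sq hm0]
    _ ≤ frobNorm (tridiag n δ σ - S) := Real.sqrt_le_sqrt hsq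

lemma evec_ne_zero_s9 (n : ℕ) (hn : 2 ≤ n) (a : ℕ) (ha : 1 ≤ a) (ha' : a ≤ n) :
    evec n a ≠ 0 := by
  intro hcontra
  have h0 : evec n a ⟨0, by omega⟩ = 0 := by rw [hcontra]; rfl
  have hpos : 0 < evec n a ⟨0, by omega⟩ := by
    simp only [evec]
    apply mul_pos (Real.sqrt_pos.mpr (by positivity))
    apply Real.sin_pos_of_pos_of_lt_pi
    · have : (0:ℝ) < (a:ℝ) := by exact_mod_cast ha
      have := Real.pi_pos
      rw [show (a:ℝ) * ((0:ℕ)+1) * π / (n+1) = (a:ℝ) * π / (n+1) by push_cast; ring]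
      positivity
    · rw [show (a:ℝ) * ((0:ℕ)+1) * π / (n+1) = (a:ℝ) * π / (n+1) by push_cast; ring]
      rw [div_lt_iff₀ (by positivity)]
      have h1 : (a:ℝ) < (n:ℝ)+1 := by exact_mod_cast Nat.lt_succ_of_le ha'
      nlinarith [Real.pi_pos]
  exact absurd h0 (ne_of_gt hpos)

open Matrix in
lemma part1_mem (n : ℕ) (hn : 2 ≤ n) (δ σ : ℝ) (a : ℕ) (ha : 1 ≤ a) (ha' : a ≤ n) :
    ∃ S : Matrix (Fin n) (Fin n) ℝ, S.det = 0 ∧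
      |lam n δ σ a| = frobNorm (tridiag n δ σ - S) := by
  set l := lam n δ σ a with hl
  set v := evec n a with hv
  set E : Matrix (Fin n) (Fin n) ℝ := Matrix.of fun i j => l * (v i * v j) with hE
  refine ⟨tridiag n δ σ - E, ?_, ?_⟩
  · rw [← Matrix.exists_mulVec_eq_zero_iff]
    refine ⟨v, evec_ne_zero_s9 n hn a ha ha', ?_⟩
    funext i
    have hvv : ∑ j, v j * v j = 1 := by
      have := evec_dot n a a ha ha' ha ha'
      rw [if_pos rfl] at this
      exact this
    have hEv : E.mulVec v i = l * v i := by
      unfold Matrix.mulVec dotProduct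
      simp only [hE, Matrix.of_apply]
      rw [show ∑ j, l * (v i * v j) * v j = (l * v i) * ∑ j, v j * v j by
        rw [Finset.mul_sum]; exact Finset.sum_congr rfl fun j _ => by ring]
      rw [hvv, mul_one]
    have hTv : (tridiag n δ σ).mulVec v i = l * v i := by
      rw [hv]
      rw [tridiag_evec n δ σ a i]
      rw [hl]
      simp only [lam]
    rw [Matrix.sub_mulVec]
    simp only [Pi.sub_apply, Pi.zero_apply]
    rw [hEv, hTv, sub_self]
  · rw [sub_sub_cancel]
    have hfrob : ∑ i, ∑ j, (E i j)^2 = l^2 := by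
      have hvv : ∑ j, v j ^2 = 1 := by
        have := evec_dot n a a ha ha' ha ha'
        rw [if_pos rfl] at this
        rw [← this]
        exact Finset.sum_congr rfl fun j _ => by ring
      calc ∑ i, ∑ j, (E i j)^2 = ∑ i, ∑ j, l^2 * (v i ^2 * v j ^2) := by
            apply Finset.sum_congr rfl; intro i _
            apply Finset.sum_congr rfl; intro j _
            simp only [hE, Matrix.of_apply]; ring
        _ = l^2 * ((∑ i, v i ^2) * (∑ j, v j ^2)) := by
            rw [Finset.sum_mul_sum, Finset.mul_sum]
            apply Finset.sum_congr rfl; intro i _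
            rw [Finset.mul_sum]
        _ = l^2 := by rw [hvv, one_mul, mul_one]
    unfold frobNorm
    rw [hfrob, Real.sqrt_sq_eq_abs]

lemma tridiag_sub_s9 (n : ℕ) (a b a' b' : ℝ) :
    tridiag n a b - tridiag n a' b' = tridiag n (a-a') (b-b') := by
  ext i j
  simp only [Matrix.sub_apply, tridiag, Matrix.of_apply]
  split_ifs <;> ring

lemma tridiag_frob (n : ℕ) (a b : ℝ) :
    frobNorm (tridiag n a b) = Real.sqrt ((n:ℝ)*a^2 + 2*((↑(n-1)):ℝ)*b^2) := by
  unfold frobNorm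
  rw [tridiag_frob_sq]

lemma kap_eq (n a : ℕ) : kap n a
    = Real.sqrt (1/(n:ℝ) + 2/((n:ℝ)-1) * (Real.cos ((a:ℝ)*π/((n:ℝ)+1)))^2) := rfl

lemma kapsq_pos (n : ℕ) (hn : 2 ≤ n) (c : ℝ) :
    0 < 1/(n:ℝ) + 2/((n:ℝ)-1) * c^2 := by
  have hn2 : (2:ℝ) ≤ (n:ℝ) := by exact_mod_cast hn
  have h1 : 0 < 1/(n:ℝ) := by positivity
  have h2 : 0 ≤ 2/((n:ℝ)-1) * c^2 := by
    apply mul_nonneg (div_nonneg (by norm_num) (by linarith)) (sq_nonneg _)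
  linarith

lemma part2_mem (n : ℕ) (hn : 2 ≤ n) (δ σ : ℝ) (a : ℕ) (ha : 1 ≤ a) (ha' : a ≤ n) :
    ∃ d s : ℝ, (tridiag n d s).det = 0 ∧
      |lam n δ σ a| / kap n a = frobNorm (tridiag n δ σ - tridiag n d s) := by
  have hn2 : (2:ℝ) ≤ (n:ℝ) := by exact_mod_cast hn
  have hn0 : (0:ℝ) < (n:ℝ) := by linarith
  have hn1 : (0:ℝ) < (n:ℝ) - 1 := by linarith
  set c : ℝ := Real.cos ((a:ℝ)*π/((n:ℝ)+1)) with hc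
  set κsq : ℝ := 1/(n:ℝ) + 2/((n:ℝ)-1) * c^2 with hκsq
  have hκ : 0 < κsq := kapsq_pos n hn c
  set t : ℝ := lam n δ σ a / κsq with ht
  set d : ℝ := δ - t/(n:ℝ) with hd
  set s : ℝ := σ - t*c/((n:ℝ)-1) with hs
  have hexp : lam n δ σ a = δ + 2*σ*c := rfl
  have htκ : t * κsq = lam n δ σ a := div_mul_cancel₀ _ hκ.ne'
  have hline : d + 2*s*c = 0 := by
    have e : d + 2*s*c = (δ + 2*σ*c) - t*κsq := by
      rw [hd, hs, hκsq]
      field_simp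
      ring
    rw [e, htκ, hexp, sub_self]
  refine ⟨d, s, ?_, ?_⟩
  · rw [tridiag_det n d s]
    apply Finset.prod_eq_zero (Finset.mem_univ (⟨a-1, by omega⟩ : Fin n))
    have ecast : ((((⟨a-1, by omega⟩ : Fin n) : ℕ) + 1 : ℕ) : ℝ) = (a:ℝ) := by
      simp only [Fin.val_mk]
      push_cast [Nat.cast_sub ha]
      ring
    rw [show ((((⟨a-1, by omega⟩ : Fin n) : ℕ):ℝ) + 1) = ((((⟨a-1, by omega⟩ : Fin n) : ℕ) + 1 : ℕ) : ℝ) by push_cast; ring, ecast]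
    rw [← hc]
    linarith [hline]
  · rw [tridiag_sub_s9, tridiag_frob]
    have hda : δ - d = t/(n:ℝ) := by rw [hd]; ring
    have hsa : σ - s = t*c/((n:ℝ)-1) := by rw [hs]; ring
    rw [hda, hsa]
    have hcast : ((↑(n-1)):ℝ) = (n:ℝ) - 1 := by
      push_cast [Nat.cast_sub (by omega : 1 ≤ n)]
      ring
    rw [hcast]
    have hinside : (n:ℝ)*(t/(n:ℝ))^2 + 2*((n:ℝ)-1)*(t*c/((n:ℝ)-1))^2 = t^2 * κsq := by
      rw [hκsq]; field_simp
    have hkap : kap n a = Real.sqrt κsq := by rw [kap_eq, hκsq]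
    have hsκ : 0 < Real.sqrt κsq := Real.sqrt_pos.mpr hκ
    rw [hinside, Real.sqrt_mul (sq_nonneg t), Real.sqrt_sq_eq_abs, hkap, ht, abs_div,
      abs_of_pos hκ]
    rw [div_mul_eq_mul_div, div_eq_div_iff hsκ.ne' hκ.ne', mul_assoc,
      Real.mul_self_sqrt hκ.le]

lemma sandwich_ident (nr A B c : ℝ) (h0 : 0 < nr) (h1 : 0 < nr - 1) :
    (A + 2*c*B)^2 ≤ (nr*A^2 + 2*(nr-1)*B^2) * (1/nr + 2/(nr-1) * c^2) := by
  have hident : (nr*A^2 + 2*(nr-1)*B^2) * (1/nr + 2/(nr-1) * c^2) - (A + 2*c*B)^2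
      = (2/(nr*(nr-1))) * ((nr-1)*B - c*nr*A)^2 := by
    field_simp
    ring
  have hpos : 0 ≤ (2/(nr*(nr-1))) * ((nr-1)*B - c*nr*A)^2 := by
    apply mul_nonneg (div_nonneg (by norm_num) (by positivity)) (sq_nonneg _)
  linarith

lemma part2_lb (n : ℕ) (hn : 2 ≤ n) (δ σ : ℝ) (ne : (Finset.Icc 1 n).Nonempty)
    (d s : ℝ) (hdet : (tridiag n d s).det = 0) :
    (Finset.Icc 1 n).inf' ne (fun h => |lam n δ σ h| / kap n h)
      ≤ frobNorm (tridiag n δ σ - tridiag n d s) := by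
  have hn2 : (2:ℝ) ≤ (n:ℝ) := by exact_mod_cast hn
  have hn0 : (0:ℝ) < (n:ℝ) := by linarith
  have hn1 : (0:ℝ) < (n:ℝ) - 1 := by linarith
  rw [tridiag_det n d s, Finset.prod_eq_zero_iff] at hdet
  obtain ⟨h, _, hline⟩ := hdet
  set a : ℕ := (h:ℕ)+1 with hadef
  have ha : 1 ≤ a := by omega
  have ha' : a ≤ n := by omega
  set c : ℝ := Real.cos ((a:ℝ)*π/((n:ℝ)+1)) with hc
  have hline' : d + 2*s*c = 0 := by
    rw [hc, hadef]
    push_cast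
    convert hline using 4
  set κsq : ℝ := 1/(n:ℝ) + 2/((n:ℝ)-1) * c^2 with hκsq
  have hκ : 0 < κsq := kapsq_pos n hn c
  have hkap : kap n a = Real.sqrt κsq := by rw [kap_eq, hκsq]
  have hsκ : 0 < Real.sqrt κsq := Real.sqrt_pos.mpr hκ
  set A : ℝ := δ - d with hA
  set B : ℝ := σ - s with hB
  rw [tridiag_sub_s9, tridiag_frob]
  have hcast : ((↑(n-1)):ℝ) = (n:ℝ) - 1 := by
    push_cast [Nat.cast_sub (by omega : 1 ≤ n)]
    ring
  rw [hcast]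
  set q : ℝ := |lam n δ σ a| / kap n a with hq
  have hq0 : 0 ≤ q := div_nonneg (abs_nonneg _) (hkap ▸ hsκ.le)
  have hmem : a ∈ Finset.Icc 1 n := Finset.mem_Icc.mpr ⟨ha, ha'⟩
  have hinf : (Finset.Icc 1 n).inf' ne (fun h => |lam n δ σ h| / kap n h) ≤ q :=
    Finset.inf'_le _ hmem
  have hX0 : 0 ≤ (n:ℝ)*A^2 + 2*((n:ℝ)-1)*B^2 := by positivity
  refine le_trans hinf ?_
  rw [Real.le_sqrt hq0 hX0]
  have hqsq : q^2 = (lam n δ σ a)^2 / κsq := by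
    rw [hq, hkap, div_pow, sq_abs, Real.sq_sqrt hκ.le]
  rw [hqsq, div_le_iff₀ hκ]
  have hlam : lam n δ σ a = A + 2*c*B := by
    have e : lam n δ σ a = δ + 2*σ*c := rfl
    rw [e, hA, hB]
    linear_combination hline'
  rw [hlam, hκsq]
  exact sandwich_ident (n:ℝ) A B c hn0 hn1

/-- for `σ ≠ 0`, the unstructured distance to singularity of `T` in the Frobenius
norm is `min_h |λ_h|` (attained), and the structured distance `d_F^𝒯(T)` (also attained) satisfies
`min_h |λ_h| ≤ d_F^𝒯(T) ≤ min_h |λ_h|/κ(h)`. -/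
theorem stmt_9 (n : ℕ) (hn : 2 ≤ n) (δ σ : ℝ) (hσ : σ ≠ 0) :
    IsLeast {r : ℝ | ∃ S : Matrix (Fin n) (Fin n) ℝ,
        S.det = 0 ∧ r = frobNorm (tridiag n δ σ - S)}
      ((Finset.Icc 1 n).inf' (Finset.nonempty_Icc.mpr (by omega))
        fun h => |lam n δ σ h|) ∧
    ∃ dT : ℝ,
      IsLeast {r : ℝ | ∃ S : Matrix (Fin n) (Fin n) ℝ,
          S.det = 0 ∧ (∃ d s : ℝ, S = tridiag n d s) ∧
          r = frobNorm (tridiag n δ σ - S)} dT ∧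
      ((Finset.Icc 1 n).inf' (Finset.nonempty_Icc.mpr (by omega))
        fun h => |lam n δ σ h|) ≤ dT ∧
      dT ≤ (Finset.Icc 1 n).inf' (Finset.nonempty_Icc.mpr (by omega))
        fun h => |lam n δ σ h| / kap n h := by
  have ne1 : (Finset.Icc 1 n).Nonempty := Finset.nonempty_Icc.mpr (by omega)
  constructor
  · constructor
    · obtain ⟨a, ha_mem, hlow⟩ := Finset.exists_mem_eq_inf'
        (Finset.nonempty_Icc.mpr (by omega : (1:ℕ) ≤ n)) (fun h => |lam n δ σ h|)
      obtain ⟨ha1, ha2⟩ := Finset.mem_Icc.mp ha_mem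
      obtain ⟨S, hSdet, hSfrob⟩ := part1_mem n hn δ σ a ha1 ha2
      exact ⟨S, hSdet, by rw [hlow]; exact hSfrob⟩
    · rintro r ⟨S, hSdet, rfl⟩
      exact part1_lb n hn δ σ _ S hSdet
  · refine ⟨(Finset.Icc 1 n).inf' (Finset.nonempty_Icc.mpr (by omega))
      (fun h => |lam n δ σ h| / kap n h), ⟨?_, ?_⟩, ?_, le_refl _⟩
    · obtain ⟨a, ha_mem, heq⟩ := Finset.exists_mem_eq_inf'
        (Finset.nonempty_Icc.mpr (by omega : (1:ℕ) ≤ n)) (fun h => |lam n δ σ h| / kap n h)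
      obtain ⟨ha1, ha2⟩ := Finset.mem_Icc.mp ha_mem
      obtain ⟨d, s, hdet, hfrob⟩ := part2_mem n hn δ σ a ha1 ha2
      exact ⟨tridiag n d s, hdet, ⟨d, s, rfl⟩, by rw [heq]; exact hfrob⟩
    · rintro r ⟨S, hSdet, ⟨d, s, rfl⟩, rfl⟩
      exact part2_lb n hn δ σ _ d s hSdet
    · obtain ⟨a, ha_mem, heq⟩ := Finset.exists_mem_eq_inf'
        (Finset.nonempty_Icc.mpr (by omega : (1:ℕ) ≤ n)) (fun h => |lam n δ σ h| / kap n h)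
      obtain ⟨ha1, ha2⟩ := Finset.mem_Icc.mp ha_mem
      obtain ⟨d, s, hdet, hfrob⟩ := part2_mem n hn δ σ a ha1 ha2
      rw [heq, hfrob]
      exact part1_lb n hn δ σ _ (tridiag n d s) hdet
end
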